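/- A quadratic left Leibniz algebra (A, •, ⟨ , ⟩) (with ⟨ , ⟩ nondegenerate, symmetric and invariant) is flat if and only if (A, •) is a 2-step nilpotent symmetric Leibniz algebra, i.e., (u•v)•w = 0 = u•(v•w) for all u,v,w and A is both a left and right Leibniz algebra. -/
import Mathlib


/-- A quadratic left Leibniz algebra is flat iff it is a 2-step nilpotent symmetric
Leibniz algebra. -/
theorem quadratic_flat_iff_twoStepNilpotent_symmetric
    {K A : Type*} [Field K] [AddCommGroup A] [Module K A]
    (htwo : (2 : K) ≠ 0)
    (mul starP circP : A →ₗ[K] A →ₗ[K] A)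
    (B : A →ₗ[K] A →ₗ[K] K)
    (hLL : ∀ u v w : A, mul u (mul v w) = mul (mul u v) w + mul v (mul u w))
    (hsymm : ∀ u v : A, B u v = B v u)
    (hnd : ∀ v : A, (∀ u : A, B u v = 0) → v = 0)
    (hinv : ∀ u v w : A, B (mul u v) w = B u (mul v w))
    (htor : ∀ u v : A, mul u v = starP u v + circP v u)
    (hcomp : ∀ u v w : A, B (starP u v) w = B v (circP u w)) :
    ((∀ u v : A, starP (mul u v) = starP u ∘ₗ starP v - starP v ∘ₗ starP u) ∧
     (∀ u v : A, circP (mul u v) = starP u ∘ₗ circP v + circP v ∘ₗ circP u) ∧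
     (∀ u v : A, circP (mul u v) = starP u ∘ₗ circP v - circP v ∘ₗ starP u)) ↔
    ((∀ u v w : A, mul (mul u v) w = 0 ∧ mul u (mul v w) = 0) ∧
     (∀ u v w : A, mul u (mul v w) = mul (mul u v) w - mul (mul u w) v)) := by
  -- cancellation of 2
  have hcancel : ∀ x : A, (2 : K) • x = 0 → x = 0 := by
    intro x hx
    have : (2 : K)⁻¹ • ((2 : K) • x) = x := inv_smul_smul₀ htwo x
    rw [hx, smul_zero] at this
    exact this.symm
  -- the Koszul-type formula: B (mul a b) c = B (starP a b) c + B (starP b c) a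
  have hM : ∀ a b c : A, B (mul a b) c = B (starP a b) c + B (starP b c) a := by
    intro a b c
    have h1 : B (circP b a) c = B (starP b c) a := by
      rw [hsymm]; exact (hcomp b c a).symm
    rw [htor a b, map_add, LinearMap.add_apply, h1]
  -- starP is half of mul
  have hsc : ∀ u v : A, (2 : K) • starP u v = mul u v := by
    intro u v
    have key : ∀ z : A, B z ((2 : K) • starP u v - mul u v) = 0 := by
      intro z
      have hM1 := hM u v z
      have hM2 := hM v z u
      have hM3 := hM z u v
      have hE : B (mul v z) u = B (mul z u) v := by
        rw [hinv v z u, hsymm]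
      have expand : B z ((2 : K) • starP u v - mul u v)
          = (2 : K) * B (starP u v) z - B (mul u v) z := by
        rw [map_sub, map_smul, smul_eq_mul, hsymm z, hsymm z]
      rw [expand]
      linear_combination -hM1 + hM2 - hM3 - hE
    have h0 : (2 : K) • starP u v - mul u v = 0 := hnd _ key
    exact sub_eq_zero.mp h0
  -- circP is half of the opposite mul
  have hcc : ∀ u v : A, (2 : K) • circP u v = mul v u := by
    intro u v
    have h : circP u v = mul v u - starP v u := by rw [htor v u]; abel
    rw [h, smul_sub, hsc v u, ← hsc v u]
    rw [two_smul, two_smul]; abel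
  constructor
  · rintro ⟨hF1, hF2, hF3⟩
    -- left 2-step nilpotency
    have nilL : ∀ u v w : A, mul (mul u v) w = 0 := by
      intro u v w
      have h1 : starP (mul u v) w = starP u (starP v w) - starP v (starP u w) := by
        have := hF1 u v
        rw [LinearMap.ext_iff] at this
        simpa [LinearMap.sub_apply, LinearMap.comp_apply] using this w
      have h2 : (2 : K) • ((2 : K) • starP (mul u v) w)
          = mul u (mul v w) - mul v (mul u w) := by
        rw [h1, smul_sub, smul_sub]
        congr 1
        · calc (2:K) • ((2:K) • starP u (starP v w))
              = (2:K) • starP u ((2:K) • starP v w) := by rw [map_smul]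
            _ = (2:K) • starP u (mul v w) := by rw [hsc v w]
            _ = mul u (mul v w) := hsc u (mul v w)
        · calc (2:K) • ((2:K) • starP v (starP u w))
              = (2:K) • starP v ((2:K) • starP u w) := by rw [map_smul]
            _ = (2:K) • starP v (mul u w) := by rw [hsc u w]
            _ = mul v (mul u w) := hsc v (mul u w)
      rw [hsc (mul u v) w] at h2
      -- h2 : (2:K) • mul (mul u v) w = mul u (mul v w) - mul v (mul u w)
      have h3 : mul u (mul v w) - mul v (mul u w) = mul (mul u v) w := by
        rw [hLL u v w]; abel
      rw [h3, two_smul] at h2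
      -- h2 : X + X = X
      have : mul (mul u v) w + mul (mul u v) w = 0 + mul (mul u v) w := by
        rw [zero_add]; exact h2
      exact add_right_cancel this
    have comm : ∀ u v w : A, mul u (mul v w) = mul v (mul u w) := by
      intro u v w
      rw [hLL u v w, nilL u v w, zero_add]
    -- right 2-step nilpotency
    have nilR' : ∀ u v w : A, mul u (mul w v) = 0 := by
      intro u v w
      have h1 : circP (mul u v) w = starP u (circP v w) + circP v (circP u w) := by
        have := hF2 u v
        rw [LinearMap.ext_iff] at this
        simpa [LinearMap.add_apply, LinearMap.comp_apply] using this w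
      have h2 : (2 : K) • ((2 : K) • circP (mul u v) w)
          = mul u (mul w v) + mul (mul w u) v := by
        rw [h1, smul_add, smul_add]
        congr 1
        · calc (2:K) • ((2:K) • starP u (circP v w))
              = (2:K) • starP u ((2:K) • circP v w) := by rw [map_smul]
            _ = (2:K) • starP u (mul w v) := by rw [hcc v w]
            _ = mul u (mul w v) := hsc u (mul w v)
        · calc (2:K) • ((2:K) • circP v (circP u w))
              = (2:K) • circP v ((2:K) • circP u w) := by rw [map_smul]
            _ = (2:K) • circP v (mul w u) := by rw [hcc u w]
            _ = mul (mul w u) v := hcc v (mul w u)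
      rw [hcc (mul u v) w, nilL w u v, add_zero] at h2
      -- h2 : (2:K) • mul w (mul u v) = mul u (mul w v)
      have h3 : mul w (mul u v) = mul u (mul w v) := comm w u v
      rw [h3, two_smul] at h2
      have : mul u (mul w v) + mul u (mul w v) = 0 + mul u (mul w v) := by
        rw [zero_add]; exact h2
      exact add_right_cancel this
    refine ⟨fun u v w => ⟨nilL u v w, nilR' u w v⟩, fun u v w => ?_⟩
    rw [nilL u v w, nilL u w v, nilR' u w v, sub_zero]
  · rintro ⟨hnil, -⟩
    have nilL : ∀ u v w : A, mul (mul u v) w = 0 := fun u v w => (hnil u v w).1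
    have nilR : ∀ u v w : A, mul u (mul v w) = 0 := fun u v w => (hnil u v w).2
    -- all composite star/circ products vanish
    have zs : ∀ u v w : A, starP (mul u v) w = 0 := by
      intro u v w
      apply hcancel
      rw [hsc (mul u v) w, nilL u v w]
    have zc : ∀ u v w : A, circP (mul u v) w = 0 := by
      intro u v w
      apply hcancel
      rw [hcc (mul u v) w, nilR w u v]
    have zss : ∀ u v w : A, starP u (starP v w) = 0 := by
      intro u v w
      apply hcancel; apply hcancel
      rw [← map_smul, hsc v w, hsc u (mul v w), nilR u v w]
    have zsc : ∀ u v w : A, starP u (circP v w) = 0 := by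
      intro u v w
      apply hcancel; apply hcancel
      rw [← map_smul, hcc v w, hsc u (mul w v), nilR u w v]
    have zcs : ∀ u v w : A, circP u (starP v w) = 0 := by
      intro u v w
      apply hcancel; apply hcancel
      rw [← map_smul, hsc v w, hcc u (mul v w), nilL v w u]
    have zcc : ∀ u v w : A, circP u (circP v w) = 0 := by
      intro u v w
      apply hcancel; apply hcancel
      rw [← map_smul, hcc v w, hcc u (mul w v), nilL w v u]
    refine ⟨fun u v => ?_, fun u v => ?_, fun u v => ?_⟩
    all_goals
      apply LinearMap.ext
      intro w
      simp [LinearMap.sub_apply, LinearMap.add_apply, LinearMap.comp_apply,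
        zs, zc, zss, zsc, zcs, zcc]
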